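/- Let A be a ring with property (SF) which satisfies the strong rank condition. Let N be a free A-module and M ≤ N a submodule such that at least one of M or N is finitely generated, and let L be the algebraic closure of the extension M ≤ N (so M ≤alg L ≤* N). Then L equals the intersection of all submodules L' of N with M ≤ L' such that L' is a free factor of N. -/

import Mathlib

universe u v

/-- Property (SF): every submodule of every free `A`-module is a free `A`-module. -/
def HasSF (A : Type u) [Ring A] : Prop :=
  ∀ (M : Type v) [AddCommGroup M] [Module A M], Module.Free A M →
    ∀ N : Submodule A M, Module.Free A ↥N

/-- `M` is a free factor of `N` (written `M ≤* N`): `M ≤ N` and there is a submodule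
`M' ≤ N` with `M ⊓ M' = ⊥` and `M ⊔ M' = N` such that `M'` is a free module. -/
def IsFreeFactor {A : Type*} [Ring A] {P : Type*} [AddCommGroup P] [Module A P]
    (M N : Submodule A P) : Prop :=
  M ≤ N ∧ ∃ M' : Submodule A P, M' ≤ N ∧ M ⊓ M' = ⊥ ∧ M ⊔ M' = N ∧ Module.Free A ↥M'

/-- The extension `M ≤ N` is algebraic: the only submodule `L` with `M ≤ L ≤ N`
which is a free factor of `N` is `L = N`. -/
def IsAlgExt {A : Type*} [Ring A] {P : Type*} [AddCommGroup P] [Module A P]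
    (M N : Submodule A P) : Prop :=
  M ≤ N ∧ ∀ L : Submodule A P, M ≤ L → IsFreeFactor L N → L = N

/-- Key lemma: if `L'` is a free factor of `⊤`, then for any submodule `L`,
`L ⊓ L'` is a free factor of `L`. -/
theorem inf_isFreeFactor {A : Type u} [Ring A] (hSF : HasSF.{u, v} A)
    (N : Type v) [AddCommGroup N] [Module A N] [Module.Free A N]
    (L L' : Submodule A N) (hff : IsFreeFactor L' ⊤) :
    IsFreeFactor (L ⊓ L') L := by
  obtain ⟨-, C, -, hinf, hsup, hCfree⟩ := hff
  have hC : IsCompl C L' := ⟨disjoint_iff.mpr (by rw [inf_comm]; exact hinf),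
    codisjoint_iff.mpr (by rw [sup_comm]; exact hsup)⟩
  set π : N →ₗ[A] ↥C := C.linearProjOfIsCompl L' hC with hπ
  have hkerπ : LinearMap.ker π = L' := Submodule.linearProjOfIsCompl_ker hC
  set f : ↥L →ₗ[A] ↥C := π ∘ₗ L.subtype with hf
  have hkerf : LinearMap.ker f = Submodule.comap L.subtype L' := by
    rw [hf, LinearMap.ker_comp, hkerπ]
  -- the range of f is free, hence projective
  have hRfree : Module.Free A ↥(LinearMap.range f) := hSF ↥C hCfree _
  have hproj : Module.Projective A ↥(LinearMap.range f) := inferInstance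
  obtain ⟨h, hh⟩ := Module.projective_lifting_property f.rangeRestrict LinearMap.id
    f.surjective_rangeRestrict
  set g : ↥L →ₗ[A] ↥L := h ∘ₗ f.rangeRestrict with hg
  have hgid : ∀ x, f.rangeRestrict (g x) = f.rangeRestrict x := fun x => by
    have := LinearMap.congr_fun hh (f.rangeRestrict x)
    exact this
  have hIsProj : LinearMap.IsProj (LinearMap.range g) g := by
    refine ⟨fun x => LinearMap.mem_range_self g x, fun x hx => ?_⟩
    obtain ⟨y, rfl⟩ := hx
    show h (f.rangeRestrict (g y)) = g y
    rw [hgid y]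
    rfl
  have hcompl : IsCompl (LinearMap.range g) (LinearMap.ker g) := hIsProj.isCompl
  have hrr0 : ∀ x : ↥L, f.rangeRestrict x = 0 ↔ f x = 0 := fun x => by
    rw [Subtype.ext_iff]
    exact Iff.rfl
  have hkerg : LinearMap.ker g = LinearMap.ker f := by
    ext x
    simp only [LinearMap.mem_ker]
    constructor
    · intro hx
      have h1 : f.rangeRestrict x = 0 := by
        rw [← hgid x, show g x = 0 from hx, map_zero]
      exact (hrr0 x).mp h1
    · intro hx
      show h (f.rangeRestrict x) = 0
      rw [(hrr0 x).mpr hx, map_zero]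
  have hib : LinearMap.range g ⊓ LinearMap.ker f = ⊥ := by
    rw [← hkerg]; exact hcompl.inf_eq_bot
  have hst : LinearMap.range g ⊔ LinearMap.ker f = ⊤ := by
    rw [← hkerg]; exact hcompl.sup_eq_top
  -- transport to ambient module
  have hK : Submodule.map L.subtype (LinearMap.ker f) = L ⊓ L' := by
    rw [hkerf]; exact Submodule.map_comap_subtype L L'
  refine ⟨inf_le_left, Submodule.map L.subtype (LinearMap.range g), ?_, ?_, ?_, ?_⟩
  · exact (Submodule.map_subtype_le L _)
  · rw [← hK, ← Submodule.map_inf _ (Submodule.injective_subtype L),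
      inf_comm, hib, Submodule.map_bot]
  · rw [← hK, ← Submodule.map_sup, sup_comm, hst, Submodule.map_subtype_top]
  · -- range g is free: it's isomorphic to range f
    have hinj : Function.Injective h := by
      intro a b hab
      have := LinearMap.congr_fun hh a
      have hb := LinearMap.congr_fun hh b
      simp only [LinearMap.coe_comp, Function.comp_apply, LinearMap.id_apply] at this hb
      rw [← this, ← hb, hab]
    have hrg : LinearMap.range g = LinearMap.range h := by
      rw [hg, LinearMap.range_comp, LinearMap.range_rangeRestrict, Submodule.map_top]
    have e1 : ↥(LinearMap.range f) ≃ₗ[A] ↥(LinearMap.range h) :=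
      LinearEquiv.ofInjective h hinj
    have e2 : ↥(LinearMap.range g) ≃ₗ[A]
        ↥(Submodule.map L.subtype (LinearMap.range g)) :=
      Submodule.equivMapOfInjective _ (Submodule.injective_subtype L) _
    exact Module.Free.of_equiv ((hrg ▸ e1).trans e2)

theorem algebraicClosure_eq_sInf_freeFactors {A : Type u} [Ring A] [StrongRankCondition A]
    (hSF : HasSF.{u, v} A)
    (N : Type v) [AddCommGroup N] [Module A N] [Module.Free A N]
    (M : Submodule A N) (hfg : M.FG ∨ Module.Finite A N)
    (L : Submodule A N) (hLalg : IsAlgExt M L) (hLff : IsFreeFactor L ⊤) :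
    L = sInf {L' : Submodule A N | M ≤ L' ∧ IsFreeFactor L' ⊤} := by
  apply le_antisymm
  · refine le_sInf fun L' hL' => ?_
    obtain ⟨hML', hff⟩ := hL'
    have hffL : IsFreeFactor (L ⊓ L') L := inf_isFreeFactor hSF N L L' hff
    have := hLalg.2 (L ⊓ L') (le_inf hLalg.1 hML') hffL
    exact inf_eq_left.mp this
  · exact sInf_le ⟨hLalg.1, hLff⟩
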